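/- Let n ≥ 1, let K, L ⊆ ℝⁿ be convex bodies with cent(K) = 0 and K ⊆ b·Bⁿ for some b > 0, where Bⁿ is the closed Euclidean unit ball. Suppose 0 < ε < 1/(n+1) and there exists z ∈ ℝⁿ with K ⊆ L ⊆ (1 + ε)·K + z. Then |cent(L)| ≤ 4·n·b·ε. -/

import Mathlib

open Set Metric Pointwise MeasureTheory

/-- The centroid (center of mass) of a set `K ⊆ ℝⁿ`. -/
noncomputable def centroid {n : ℕ} (K : Set (EuclideanSpace ℝ (Fin n))) :
    EuclideanSpace ℝ (Fin n) :=
  (volume K).toReal⁻¹ • ∫ x in K, x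

set_option maxHeartbeats 2000000 in
theorem stmt17 {n : ℕ} (hn : 1 ≤ n) (K L : Set (EuclideanSpace ℝ (Fin n)))
    (hKcomp : IsCompact K) (hKconv : Convex ℝ K) (hKint : (interior K).Nonempty)
    (hLcomp : IsCompact L) (hLconv : Convex ℝ L) (hLint : (interior L).Nonempty)
    (hKcent : centroid K = 0)
    (b : ℝ) (hb : 0 < b) (hKb : K ⊆ b • closedBall (0 : EuclideanSpace ℝ (Fin n)) 1)
    (ε : ℝ) (hε0 : 0 < ε) (hε1 : ε < 1 / ((n : ℝ) + 1))
    (h : ∃ z : EuclideanSpace ℝ (Fin n), K ⊆ L ∧ L ⊆ (1 + ε) • K + {z}) :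
    ‖centroid L‖ ≤ 4 * n * b * ε := by
  obtain ⟨z, hKL, hLz⟩ := h
  have hKm : MeasurableSet K := hKcomp.isClosed.measurableSet
  have hLm : MeasurableSet L := hLcomp.isClosed.measurableSet
  have hKpos : 0 < volume K := Measure.measure_pos_of_nonempty_interior _ hKint
  have hKfin : volume K < ⊤ := hKcomp.measure_lt_top
  have hLfin : volume L < ⊤ := hLcomp.measure_lt_top
  have hLpos : 0 < volume L := Measure.measure_pos_of_nonempty_interior _ hLint
  -- ε bounds
  have hnε : (n : ℝ) * ε < 1 := by
    have h1 : ε * ((n : ℝ) + 1) < 1 := (lt_div_iff₀ (by positivity)).mp hε1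
    nlinarith
  have hε2 : ε ≤ 1 := by nlinarith [show (1:ℝ) ≤ (n:ℝ) from by exact_mod_cast hn]
  -- norm bound on K
  have hKnorm : ∀ x ∈ K, ‖x‖ ≤ b := by
    intro x hx
    obtain ⟨u, hu, rfl⟩ := hKb hx
    rw [mem_closedBall_zero_iff] at hu
    rw [norm_smul, Real.norm_eq_abs, abs_of_pos hb]
    nlinarith
  -- integrability
  have hKi : IntegrableOn (fun x => x) K volume :=
    continuous_id.continuousOn.integrableOn_compact hKcomp
  have hLi : IntegrableOn (fun x => x) L volume :=
    continuous_id.continuousOn.integrableOn_compact hLcomp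
  -- 0 ∈ K
  have h0K : (0 : EuclideanSpace ℝ (Fin n)) ∈ K := by
    have hmem : (⨍ x in K, x) ∈ K :=
      hKconv.set_average_mem hKcomp.isClosed hKpos.ne' hKfin.ne
        ((ae_restrict_mem hKm).mono fun x hx => hx) hKi
    rw [setAverage_eq] at hmem
    have : centroid K ∈ K := hmem
    rwa [hKcent] at this
  -- bound on z
  have h0L : (0 : EuclideanSpace ℝ (Fin n)) ∈ L := hKL h0K
  obtain ⟨a, ha, w, hw, haw⟩ := hLz h0L
  obtain ⟨k₀, hk₀, rfl⟩ := ha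
  rw [Set.mem_singleton_iff] at hw
  rw [hw] at haw
  have hznorm : ‖z‖ ≤ (1 + ε) * b := by
    have hz : z = -((1 + ε) • k₀) := eq_neg_of_add_eq_zero_right haw
    rw [hz, norm_neg, norm_smul, Real.norm_eq_abs, abs_of_pos (by linarith : (0:ℝ) < 1 + ε)]
    have := hKnorm k₀ hk₀
    nlinarith
  -- bound on L
  have hLnorm : ∀ x ∈ L, ‖x‖ ≤ 2 * (1 + ε) * b := by
    intro x hx
    obtain ⟨a, ha, w, hw, rfl⟩ := hLz hx
    obtain ⟨k, hk, rfl⟩ := ha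
    rw [Set.mem_singleton_iff] at hw; rw [hw]
    calc ‖(1 + ε) • k + z‖ ≤ ‖(1 + ε) • k‖ + ‖z‖ := norm_add_le _ _
      _ ≤ (1 + ε) * b + (1 + ε) * b := by
          refine add_le_add ?_ hznorm
          rw [norm_smul, Real.norm_eq_abs, abs_of_pos (by linarith : (0:ℝ) < 1 + ε)]
          have := hKnorm k hk
          nlinarith
      _ = 2 * (1 + ε) * b := by ring
  -- volume bound
  have hvol : volume L ≤ ENNReal.ofReal ((1 + ε) ^ n) * volume K := by
    calc volume L ≤ volume ((1 + ε) • K + {z}) := measure_mono hLz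
      _ = volume ((1 + ε) • K) := by
          rw [Set.add_singleton]
          have : (· + z) '' ((1 + ε) • K) = z +ᵥ ((1 + ε) • K) := by
            ext x
            simp only [Set.mem_image, Set.mem_vadd_set, vadd_eq_add]
            constructor
            · rintro ⟨y, hy, rfl⟩; exact ⟨y, hy, add_comm z y⟩
            · rintro ⟨y, hy, rfl⟩; exact ⟨y, hy, add_comm y z⟩
          rw [this, measure_vadd]
      _ = ENNReal.ofReal ((1 + ε) ^ n) * volume K := by
          rw [Measure.addHaar_smul_of_nonneg volume (by linarith : (0:ℝ) ≤ 1 + ε),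
            finrank_euclideanSpace_fin]
  -- pass to reals
  set vK := (volume K).toReal with hvK
  set vL := (volume L).toReal with hvL
  have hvK0 : 0 < vK := ENNReal.toReal_pos hKpos.ne' hKfin.ne
  have hvL0 : 0 < vL := ENNReal.toReal_pos hLpos.ne' hLfin.ne
  have hvKL : vK ≤ vL := ENNReal.toReal_le_toReal hKfin.ne hLfin.ne |>.mpr (measure_mono hKL)
  have hvLle : vL ≤ (1 + ε) ^ n * vK := by
    have := ENNReal.toReal_le_toReal hLfin.ne ?fin |>.mpr hvol
    · rwa [ENNReal.toReal_mul, ENNReal.toReal_ofReal (by positivity)] at this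
    case fin => exact ENNReal.mul_ne_top ENNReal.ofReal_ne_top hKfin.ne
  -- (1 - nε)(1+ε)^n ≤ 1
  have hbern : (1 - (n : ℝ) * ε) * (1 + ε) ^ n ≤ 1 := by
    have h1 : 1 - (n : ℝ) * ε ≤ (1 - ε) ^ n := by
      have := one_add_mul_le_pow (by linarith : (-2 : ℝ) ≤ -ε) n
      simp only [← sub_eq_add_neg] at this
      linarith
    have h2 : (1 - ε) ^ n * (1 + ε) ^ n ≤ 1 := by
      rw [← mul_pow]
      apply pow_le_one₀ (by nlinarith) (by nlinarith)
    calc (1 - (n : ℝ) * ε) * (1 + ε) ^ n ≤ (1 - ε) ^ n * (1 + ε) ^ n := by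
          apply mul_le_mul_of_nonneg_right h1; positivity
      _ ≤ 1 := h2
  have hkey : vL - vK ≤ (n : ℝ) * ε * vL := by
    have : (1 - (n : ℝ) * ε) * vL ≤ vK := by
      calc (1 - (n : ℝ) * ε) * vL ≤ (1 - (n : ℝ) * ε) * ((1 + ε) ^ n * vK) := by
            apply mul_le_mul_of_nonneg_left hvLle; linarith
        _ = (1 - (n : ℝ) * ε) * (1 + ε) ^ n * vK := by ring
        _ ≤ 1 * vK := mul_le_mul_of_nonneg_right hbern hvK0.le
        _ = vK := one_mul _
    calc vL - vK ≤ vL - (1 - (n : ℝ) * ε) * vL := by linarith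
      _ = (n : ℝ) * ε * vL := by ring
  -- integral over K is zero
  have hintK : (∫ x in K, x : EuclideanSpace ℝ (Fin n)) = 0 := by
    have h1 : (volume K).toReal⁻¹ • (∫ x in K, x : EuclideanSpace ℝ (Fin n)) = 0 := hKcent
    have h2 : (volume K).toReal ≠ 0 := (ENNReal.toReal_pos hKpos.ne' hKfin.ne).ne'
    have h3 : (volume K).toReal • ((volume K).toReal⁻¹ • (∫ x in K, x : EuclideanSpace ℝ (Fin n)))
        = (volume K).toReal • (0 : EuclideanSpace ℝ (Fin n)) := by rw [h1]
    rwa [smul_smul, mul_inv_cancel₀ h2, one_smul, smul_zero] at h3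
  -- split integral over L
  have hsplit : (∫ x in L, x : EuclideanSpace ℝ (Fin n)) = ∫ x in L \ K, x := by
    have hdisj : Disjoint K (L \ K) := Set.disjoint_sdiff_right
    have : (∫ x in K ∪ (L \ K), x : EuclideanSpace ℝ (Fin n)) =
        (∫ x in K, x) + ∫ x in L \ K, x :=
      setIntegral_union hdisj (hLm.diff hKm) hKi (hLi.mono_set Set.diff_subset)
    rw [Set.union_diff_cancel hKL] at this
    rw [this, hintK, zero_add]
  -- norm of integral over L \ K
  have hdiffvol : (volume (L \ K)).toReal = vL - vK := by
    rw [measure_diff hKL hKm.nullMeasurableSet hKfin.ne,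
      ENNReal.toReal_sub_of_le (measure_mono hKL) hLfin.ne]
  have hnormint : ‖(∫ x in L \ K, x : EuclideanSpace ℝ (Fin n))‖ ≤
      (2 * (1 + ε) * b) * (vL - vK) := by
    rw [← hdiffvol]
    exact norm_setIntegral_le_of_norm_le_const_ae'
      (lt_of_le_of_lt (measure_mono Set.diff_subset) hLfin)
      (Filter.Eventually.of_forall fun x hx => hLnorm x hx.1)
  -- final computation
  have hfin : ‖centroid L‖ ≤ vL⁻¹ * ((2 * (1 + ε) * b) * (vL - vK)) := by
    rw [centroid, norm_smul, Real.norm_eq_abs, abs_of_nonneg (by positivity)]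
    rw [hsplit]
    apply mul_le_mul_of_nonneg_left hnormint (by positivity)
  calc ‖centroid L‖ ≤ vL⁻¹ * ((2 * (1 + ε) * b) * (vL - vK)) := hfin
    _ ≤ vL⁻¹ * ((2 * (1 + ε) * b) * ((n : ℝ) * ε * vL)) := by
        apply mul_le_mul_of_nonneg_left _ (by positivity)
        apply mul_le_mul_of_nonneg_left hkey (by positivity)
    _ = (n : ℝ) * ε * (2 * (1 + ε) * b) * (vL⁻¹ * vL) := by ring
    _ = (n : ℝ) * ε * (2 * (1 + ε) * b) := by
        rw [inv_mul_cancel₀ hvL0.ne', mul_one]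
    _ ≤ 4 * n * b * ε := by
        nlinarith [mul_nonneg (mul_nonneg (mul_nonneg (Nat.cast_nonneg n : (0:ℝ) ≤ n) hb.le)
          hε0.le) (sub_nonneg.mpr hε2)]
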